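/- ((c+3)/4)(nr + n + r − 2) + ((c−1)/4)(3r − 4 − n − (r−2) η(U_1)² + 3‖C X_1‖²) ≤ R̂ic(U_1) + Ric*(X_1) + (1/4)‖N‖² + 3 Σ_{s=2}^n ‖A(X_1, X_s)‖² − δ + tV − aH. Equality holds if and only if T(U_1, U_1) = Σ_{j=2}^r T(U_j, U_j) and T(U_1, U_j) = 0 for all j = 2, …, r. -/

import Mathlib

open scoped RealInnerProductSpace

set_option maxHeartbeats 2000000 in
/-- Combined Chen–Ricci inequality for an anti-invariant Riemannian submersion
from a Sasakian space form with vertical Reeb vector field. -/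
theorem stmt_13 {E : Type*} [NormedAddCommGroup E] [InnerProductSpace ℝ E]
    [FiniteDimensional ℝ E]
    (c : ℝ) (r n : ℕ) (hr : 0 < r) (hn : 0 < n)
    (VS : Submodule ℝ E)
    (U : OrthonormalBasis (Fin r) ℝ ↥VS)
    (X : OrthonormalBasis (Fin n) ℝ ↥VSᗮ)
    (ξ : E) (hξV : ξ ∈ VS) (hξ : ‖ξ‖ = 1)
    (η : E → ℝ) (hη : ∀ Y, η Y = ⟪Y, ξ⟫)
    (φ : E →ₗ[ℝ] E) (hφskew : ∀ Y Z, ⟪φ Y, Z⟫ = -⟪Y, φ Z⟫)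
    (hφ2 : ∀ Y, φ (φ Y) = -Y + η Y • ξ)
    (hanti : ∀ v ∈ VS, φ v ∈ VSᗮ)
    (C : ↥VSᗮ → ↥VSᗮ)
    (hC : ∀ x : ↥VSᗮ, (C x : E) = Submodule.orthogonalProjectionOnto VSᗮ (φ (x : E)))
    (T : ↥VS →ₗ[ℝ] ↥VS →ₗ[ℝ] ↥VSᗮ) (hT : ∀ u v, T u v = T v u)
    (A : ↥VSᗮ →ₗ[ℝ] ↥VSᗮ →ₗ[ℝ] ↥VS) (hA : ∀ x y, A x y = -A y x)
    (N : ↥VSᗮ) (hN : N = ∑ j, T (U j) (U j))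
    (Rhat : ↥VS → ↥VS → ↥VS → ↥VS → ℝ)
    (hRhat : ∀ x y z w, Rhat x y z w =
      (c + 3) / 4 * (⟪y, z⟫ * ⟪x, w⟫ - ⟪x, z⟫ * ⟪y, w⟫)
        + (c - 1) / 4 * (η (x : E) * η (z : E) * ⟪y, w⟫
            - η (y : E) * η (z : E) * ⟪x, w⟫
            + η (y : E) * η (w : E) * ⟪x, z⟫
            - η (x : E) * η (w : E) * ⟪y, z⟫)
        - ⟪T x w, T y z⟫ + ⟪T y w, T x z⟫)
    (Rstar : ↥VSᗮ → ↥VSᗮ → ↥VSᗮ → ↥VSᗮ → ℝ)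
    (hRstar : ∀ x y z w, Rstar x y z w =
      (c + 3) / 4 * (⟪y, z⟫ * ⟪x, w⟫ - ⟪x, z⟫ * ⟪y, w⟫)
        + (c - 1) / 4 * (⟪C y, z⟫ * ⟪C x, w⟫ - ⟪C y, w⟫ * ⟪C x, z⟫
            - 2 * ⟪w, C z⟫ * ⟪C x, y⟫)
        + 2 * ⟪A x y, A z w⟫ - ⟪A y z, A x w⟫ + ⟪A x z, A y w⟫)
    (Rc : E → E → E → E → ℝ)
    (hRc : ∀ x y z w, Rc x y z w =
      (c + 3) / 4 * (⟪y, z⟫ * ⟪x, w⟫ - ⟪x, z⟫ * ⟪y, w⟫)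
        + (c - 1) / 4 * (η x * η z * ⟪y, w⟫ - η y * η z * ⟪x, w⟫
            + η y * η w * ⟪x, z⟫ - η x * η w * ⟪y, z⟫
            + ⟪φ y, z⟫ * ⟪φ x, w⟫ - ⟪φ x, z⟫ * ⟪φ y, w⟫
            - 2 * ⟪φ x, y⟫ * ⟪φ z, w⟫))
    (δ tV aH : ℝ)
    (hmix : -δ + tV - aH = ∑ i, ∑ k,
      Rc (X i : E) (U k : E) (U k : E) (X i : E)) :
    ((c + 3) / 4 * ((n : ℝ) * (r : ℝ) + (n : ℝ) + (r : ℝ) - 2)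
        + (c - 1) / 4 * (3 * (r : ℝ) - 4 - (n : ℝ)
            - ((r : ℝ) - 2) * (η (U ⟨0, hr⟩ : E)) ^ 2
            + 3 * ‖C (X ⟨0, hn⟩)‖ ^ 2) ≤
      (∑ k, Rhat (U k) (U ⟨0, hr⟩) (U ⟨0, hr⟩) (U k))
        + (∑ s, Rstar (X ⟨0, hn⟩) (X s) (X s) (X ⟨0, hn⟩))
        + (1 / 4) * ‖N‖ ^ 2
        + 3 * ∑ s ∈ Finset.univ.filter (fun s => s ≠ ⟨0, hn⟩),
            ‖A (X ⟨0, hn⟩) (X s)‖ ^ 2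
        - δ + tV - aH) ∧
    (((c + 3) / 4 * ((n : ℝ) * (r : ℝ) + (n : ℝ) + (r : ℝ) - 2)
        + (c - 1) / 4 * (3 * (r : ℝ) - 4 - (n : ℝ)
            - ((r : ℝ) - 2) * (η (U ⟨0, hr⟩ : E)) ^ 2
            + 3 * ‖C (X ⟨0, hn⟩)‖ ^ 2) =
      (∑ k, Rhat (U k) (U ⟨0, hr⟩) (U ⟨0, hr⟩) (U k))
        + (∑ s, Rstar (X ⟨0, hn⟩) (X s) (X s) (X ⟨0, hn⟩))
        + (1 / 4) * ‖N‖ ^ 2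
        + 3 * ∑ s ∈ Finset.univ.filter (fun s => s ≠ ⟨0, hn⟩),
            ‖A (X ⟨0, hn⟩) (X s)‖ ^ 2
        - δ + tV - aH) ↔
      (T (U ⟨0, hr⟩) (U ⟨0, hr⟩) =
          ∑ j ∈ Finset.univ.filter (fun j => j ≠ ⟨0, hr⟩), T (U j) (U j) ∧
        ∀ j : Fin r, j ≠ ⟨0, hr⟩ → T (U ⟨0, hr⟩) (U j) = 0)) := by
  classical
  set i0 : Fin r := ⟨0, hr⟩ with hi0
  set j0 : Fin n := ⟨0, hn⟩ with hj0
  set u0 : ↥VS := U i0 with hu0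
  set x0 : ↥VSᗮ := X j0 with hx0
  -- basic orthonormality facts
  have hUo : ∀ k l : Fin r, ⟪U k, U l⟫ = if k = l then (1:ℝ) else 0 :=
    orthonormal_iff_ite.mp U.orthonormal
  have hXo : ∀ k l : Fin n, ⟪X k, X l⟫ = if k = l then (1:ℝ) else 0 :=
    orthonormal_iff_ite.mp X.orthonormal
  -- Parseval for X (in terms of E-inner products)
  have hParX : ∀ v : ↥VSᗮ,
      ∑ s, ⟪(v:E), (X s : E)⟫ * ⟪(v:E), (X s : E)⟫ = ⟪(v:E),(v:E)⟫ := by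
    intro v
    have h := X.sum_inner_mul_inner v v
    rw [show ⟪v,v⟫ = ⟪(v:E),(v:E)⟫ from Submodule.coe_inner _ _ _] at h
    rw [← h]
    exact Finset.sum_congr rfl (fun s _ => by
      rw [Submodule.coe_inner, Submodule.coe_inner, real_inner_comm ((X s : E)) (v:E)])
  -- η values on the vertical basis
  have hηU : ∀ k : Fin r, η (U k : E) = ⟪(U k : E), ξ⟫ := fun k => hη _
  have hsumη : ∑ k, η (U k : E) * η (U k : E) = 1 := by
    have ξ' : ↥VS := ⟨ξ, hξV⟩
    have h := U.sum_inner_mul_inner (⟨ξ, hξV⟩ : ↥VS) (⟨ξ, hξV⟩ : ↥VS)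
    have h2 : ⟪(⟨ξ, hξV⟩ : ↥VS), (⟨ξ, hξV⟩ : ↥VS)⟫ = (1:ℝ) := by
      rw [Submodule.coe_inner]
      simpa [real_inner_self_eq_norm_sq, hξ]
    rw [h2] at h
    rw [← h]
    refine Finset.sum_congr rfl (fun k _ => ?_)
    rw [hηU, Submodule.coe_inner, Submodule.coe_inner,
      real_inner_comm ((U k : E)) ξ]
  -- η vanishes horizontally
  have hηX : ∀ x : ↥VSᗮ, η (x : E) = 0 := by
    intro x
    rw [hη]
    exact Submodule.inner_left_of_mem_orthogonal hξV x.2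
  -- vertical ⊥ horizontal
  have horthE : ∀ (u : ↥VS) (x : ↥VSᗮ), ⟪(u:E),(x:E)⟫ = 0 := fun u x =>
    Submodule.inner_right_of_mem_orthogonal u.2 x.2
  -- C is skew-adjoint
  have hCφ : ∀ x y : ↥VSᗮ, ⟪C x, y⟫ = ⟪φ (x:E), (y:E)⟫ := by
    intro x y
    have : C x = Submodule.orthogonalProjectionOnto VSᗮ (φ (x:E)) := Subtype.coe_injective (hC x)
    rw [this, Submodule.inner_orthogonalProjectionOnto_eq_of_mem_right]
  have hCskew : ∀ x y : ↥VSᗮ, ⟪C x, y⟫ = -⟪C y, x⟫ := by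
    intro x y
    rw [hCφ, hCφ, hφskew, real_inner_comm]
  have hCdiag : ∀ x : ↥VSᗮ, ⟪C x, x⟫ = 0 := by
    intro x
    have := hCskew x x
    linarith
  -- A is alternating, diagonal zero
  have hAzero : ∀ x : ↥VSᗮ, A x x = 0 := by
    intro x
    have h := hA x x
    have h2 : (2:ℝ) • A x x = 0 := by
      rw [two_smul]; nth_rewrite 1 [h]; abel
    simpa using h2
  -- φ skew diag
  have hφself : ∀ v : E, ⟪φ v, v⟫ = 0 := by
    intro v
    have h := hφskew v v
    have h2 := real_inner_comm v (φ v)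
    linarith
  -- ‖φ u‖² for unit vertical basis
  have hφnorm : ∀ k : Fin r, ⟪φ (U k : E), φ (U k : E)⟫ = 1 - η (U k : E) * η (U k : E) := by
    intro k
    rw [hφskew, hφ2]
    have h1 : ⟪(U k : E), (U k : E)⟫ = 1 := by
      rw [← Submodule.coe_inner, hUo]; simp
    rw [inner_add_right, inner_neg_right, inner_smul_right, h1, hηU]
    try ring
  -- abbreviations
  set T00 : ↥VSᗮ := T u0 u0 with hT00
  set S : ↥VSᗮ := ∑ j ∈ Finset.univ.filter (fun j => j ≠ i0), T (U j) (U j) with hS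
  have hNTS : N = T00 + S := by
    rw [hN, hS, Finset.filter_ne']
    exact (Finset.add_sum_erase _ _ (Finset.mem_univ i0)).symm
  -- Step 1 : the vertical Ricci sum
  have h1 : (∑ k, Rhat (U k) u0 u0 (U k)) =
      (c + 3) / 4 * ((r:ℝ) - 1)
        + (c - 1) / 4 * ((2 - (r:ℝ)) * (η (u0:E) * η (u0:E)) - 1)
        - ⟪N, T00⟫ + ∑ k, ‖T u0 (U k)‖ ^ 2 := by
    have e : ∀ k, Rhat (U k) u0 u0 (U k) =
        (c + 3) / 4 * (1 - (if k = i0 then (1:ℝ) else 0))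
          + (c - 1) / 4 * (2 * ((η (U k : E) * η (u0:E)) * (if k = i0 then (1:ℝ) else 0))
              - η (u0:E) * η (u0:E) - η (U k : E) * η (U k : E))
          - ⟪T (U k) (U k), T00⟫ + ‖T u0 (U k)‖ ^ 2 := by
      intro k
      rw [hRhat, hu0, hUo, hUo, hUo, hUo, hT (U k) (U i0),
        real_inner_self_eq_norm_sq, ← hu0, ← hT00]
      by_cases hk : k = i0 <;> simp [hk, Ne.symm] <;> try ring <;> simp
    rw [Finset.sum_congr rfl (fun k _ => e k)]
    have c1 : ∑ k : Fin r, (if k = i0 then (1:ℝ) else 0) = 1 := by simp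
    have c2 : ∑ k : Fin r, (η (U k : E) * η (u0:E)) * (if k = i0 then (1:ℝ) else 0)
        = η (u0:E) * η (u0:E) := by
      rw [Finset.sum_eq_single i0] <;> simp +contextual [hu0]
    have c3 : ∑ k, ⟪T (U k) (U k), T00⟫ = ⟪N, T00⟫ := by
      rw [hN, sum_inner]
    simp only [Finset.sum_add_distrib, Finset.sum_sub_distrib, ← Finset.mul_sum,
      c1, c2, c3, hsumη, Finset.sum_const, Finset.card_univ, Fintype.card_fin,
      nsmul_eq_mul, mul_one]
    try ring
  -- Step 2 : the horizontal Ricci sum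
  have h2 : (∑ s, Rstar x0 (X s) (X s) x0) =
      (c + 3) / 4 * ((n:ℝ) - 1)
        + (c - 1) / 4 * (3 * ‖C x0‖ ^ 2)
        - 3 * ∑ s, ‖A x0 (X s)‖ ^ 2 := by
    have e : ∀ s, Rstar x0 (X s) (X s) x0 =
        (c + 3) / 4 * (1 - (if s = j0 then (1:ℝ) else 0))
          + (c - 1) / 4 * (3 * (⟪C x0, X s⟫ * ⟪C x0, X s⟫))
          - 3 * ‖A x0 (X s)‖ ^ 2 := by
      intro s
      rw [hRstar]
      have a1 : A (X s) (X s) = 0 := hAzero _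
      have a2 : A (X s) x0 = -A x0 (X s) := hA _ _
      have c1 : ⟪C (X s), X s⟫ = 0 := hCdiag _
      have c2 : ⟪C (X s), x0⟫ = -⟪C x0, X s⟫ := hCskew _ _
      have c3 : ⟪x0, C (X s)⟫ = -⟪C x0, X s⟫ := by
        rw [real_inner_comm]; exact hCskew _ _
      rw [a1, a2, c1, c2, c3, hx0]
      simp only [hXo]
      rw [inner_neg_right, real_inner_self_eq_norm_sq, ← hx0]
      by_cases hs : s = j0 <;> simp [hs, Ne.symm] <;> try ring
    rw [Finset.sum_congr rfl (fun s _ => e s)]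
    have c1 : ∑ s : Fin n, (if s = j0 then (1:ℝ) else 0) = 1 := by simp
    have c2 : ∑ s, ⟪C x0, X s⟫ * ⟪C x0, X s⟫ = ‖C x0‖ ^ 2 := by
      have h := hParX (C x0)
      have h2 : ⟪((C x0 : ↥VSᗮ) : E), ((C x0 : ↥VSᗮ) : E)⟫ = ‖C x0‖ ^ 2 := by
        rw [← Submodule.coe_inner, real_inner_self_eq_norm_sq]
      rw [h2] at h
      rw [← h]
      exact Finset.sum_congr rfl (fun s _ => by rw [Submodule.coe_inner])
    simp only [Finset.sum_add_distrib, Finset.sum_sub_distrib, ← Finset.mul_sum,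
      c1, c2, Finset.sum_const, Finset.card_univ, Fintype.card_fin,
      nsmul_eq_mul, mul_one]
    try ring
  -- Step 3 : the mixed curvature sum
  have h3 : (∑ i, ∑ k, Rc (X i : E) (U k : E) (U k : E) (X i : E)) =
      (n:ℝ) * (r:ℝ) * ((c + 3) / 4) + (c - 1) / 4 * (3 * (r:ℝ) - (n:ℝ) - 3) := by
    have e : ∀ (i : Fin n) (k : Fin r), Rc (X i : E) (U k : E) (U k : E) (X i : E) =
        (c + 3) / 4
          + (c - 1) / 4 * (-(η (U k : E) * η (U k : E))
              + 3 * (⟪φ (U k : E), (X i : E)⟫ * ⟪φ (U k : E), (X i : E)⟫)) := by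
      intro i k
      rw [hRc]
      have q1 : ⟪(U k : E), (U k : E)⟫ = 1 := by
        rw [← Submodule.coe_inner, hUo]; simp
      have q2 : ⟪(X i : E), (X i : E)⟫ = 1 := by
        rw [← Submodule.coe_inner, hXo]; simp
      have q3 : ⟪(X i : E), (U k : E)⟫ = 0 := by
        rw [real_inner_comm]; exact horthE _ _
      have q4 : ⟪(U k : E), (X i : E)⟫ = 0 := horthE _ _
      have q5 : ⟪φ (U k : E), (U k : E)⟫ = 0 := hφself _
      have q6 : ⟪φ (X i : E), (U k : E)⟫ = -⟪φ (U k : E), (X i : E)⟫ := by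
        rw [hφskew, real_inner_comm]
      rw [q1, q2, q3, q4, q5, q6, hηX]
      ring
    have inner_sum : ∀ k : Fin r,
        (∑ i, Rc (X i : E) (U k : E) (U k : E) (X i : E)) =
        ((n:ℝ) * ((c + 3) / 4) + 3 * ((c - 1) / 4))
          - ((n:ℝ) + 3) * ((c - 1) / 4) * (η (U k : E) * η (U k : E)) := by
      intro k
      rw [Finset.sum_congr rfl (fun i _ => e i k)]
      have w : ↥VSᗮ := ⟨φ (U k : E), hanti _ (U k).2⟩
      have cs : ∑ i, ⟪φ (U k : E), (X i : E)⟫ * ⟪φ (U k : E), (X i : E)⟫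
          = 1 - η (U k : E) * η (U k : E) := by
        have := hParX (⟨φ (U k : E), hanti _ (U k).2⟩ : ↥VSᗮ)
        simp only [Submodule.coe_mk] at this
        rw [this, hφnorm]
      simp only [Finset.sum_add_distrib, ← Finset.mul_sum, cs, Finset.sum_const,
        Finset.card_univ, Fintype.card_fin, nsmul_eq_mul]
      ring
    rw [Finset.sum_comm, Finset.sum_congr rfl (fun k _ => inner_sum k)]
    simp only [Finset.sum_sub_distrib, ← Finset.mul_sum, hsumη, Finset.sum_const,
      Finset.card_univ, Fintype.card_fin, nsmul_eq_mul, mul_one]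
    ring
  -- A-sum over the filter equals the full sum
  have hAfull : ∑ s ∈ Finset.univ.filter (fun s => s ≠ j0), ‖A x0 (X s)‖ ^ 2
      = ∑ s, ‖A x0 (X s)‖ ^ 2 := by
    rw [Finset.filter_ne']
    exact Finset.sum_erase _ (by rw [← hx0, hAzero]; simp)
  -- split the vertical T-sum
  have hTsplit : ∑ k, ‖T u0 (U k)‖ ^ 2
      = ‖T00‖ ^ 2 + ∑ k ∈ Finset.univ.erase i0, ‖T u0 (U k)‖ ^ 2 := by
    rw [hT00, hu0]
    exact (Finset.add_sum_erase _ _ (Finset.mem_univ i0)).symm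
  set P : ℝ := ∑ k ∈ Finset.univ.erase i0, ‖T u0 (U k)‖ ^ 2 with hP
  have hPnn : 0 ≤ P := Finset.sum_nonneg (fun k _ => by positivity)
  -- the key identity
  have key : (∑ k, Rhat (U k) u0 u0 (U k))
        + (∑ s, Rstar x0 (X s) (X s) x0)
        + (1 / 4) * ‖N‖ ^ 2
        + 3 * ∑ s ∈ Finset.univ.filter (fun s => s ≠ j0), ‖A x0 (X s)‖ ^ 2
        - δ + tV - aH
      = ((c + 3) / 4 * ((n : ℝ) * (r : ℝ) + (n : ℝ) + (r : ℝ) - 2)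
          + (c - 1) / 4 * (3 * (r : ℝ) - 4 - (n : ℝ)
              - ((r : ℝ) - 2) * (η (u0 : E)) ^ 2
              + 3 * ‖C x0‖ ^ 2))
        + ((1 / 4) * ‖T00 - S‖ ^ 2 + P) := by
    have hmix' : -δ + tV - aH
        = (n:ℝ) * (r:ℝ) * ((c + 3) / 4) + (c - 1) / 4 * (3 * (r:ℝ) - (n:ℝ) - 3) := by
      rw [hmix, h3]
    have hNsq : ‖N‖ ^ 2 = ‖T00‖ ^ 2 + 2 * ⟪T00, S⟫ + ‖S‖ ^ 2 := by
      rw [hNTS]; exact norm_add_sq_real _ _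
    have hNin : ⟪N, T00⟫ = ‖T00‖ ^ 2 + ⟪S, T00⟫ := by
      rw [hNTS, inner_add_left, real_inner_self_eq_norm_sq]
    have hDsq : ‖T00 - S‖ ^ 2 = ‖T00‖ ^ 2 - 2 * ⟪T00, S⟫ + ‖S‖ ^ 2 :=
      norm_sub_sq_real _ _
    have hST : ⟪S, T00⟫ = ⟪T00, S⟫ := real_inner_comm _ _
    rw [h1, h2, hAfull, hTsplit]
    rw [hNsq, hNin, hDsq, hST]
    have : -δ + tV - aH
        = (n:ℝ) * (r:ℝ) * ((c + 3) / 4) + (c - 1) / 4 * (3 * (r:ℝ) - (n:ℝ) - 3) := hmix'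
    nlinarith [this, sq_nonneg (η (u0:E))]
  -- conclusion
  have hQnn : 0 ≤ (1 / 4) * ‖T00 - S‖ ^ 2 + P := by positivity
  constructor
  · rw [key]; linarith
  · rw [key]
    constructor
    · intro h
      have hQ : (1 / 4) * ‖T00 - S‖ ^ 2 + P = 0 := by linarith
      have hD0 : ‖T00 - S‖ ^ 2 = 0 := by
        have h4 : (0:ℝ) ≤ (1/4) * ‖T00 - S‖ ^ 2 := by positivity
        nlinarith
      have hP0 : P = 0 := by
        have h4 : (0:ℝ) ≤ (1/4) * ‖T00 - S‖ ^ 2 := by positivity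
        linarith
      have hTS : T00 = S := by
        have := (pow_eq_zero_iff (two_ne_zero)).mp hD0
        have := norm_eq_zero.mp this
        exact sub_eq_zero.mp this
      refine ⟨hTS, ?_⟩
      intro j hj
      have := (Finset.sum_eq_zero_iff_of_nonneg
        (fun k _ => by positivity : ∀ k ∈ Finset.univ.erase i0,
          (0:ℝ) ≤ ‖T u0 (U k)‖ ^ 2)).mp hP0 j (by simp [hj])
      have := (pow_eq_zero_iff (two_ne_zero)).mp this
      exact norm_eq_zero.mp this
    · rintro ⟨hTS, hTj⟩
      have hD0 : T00 - S = 0 := by rw [hTS, hS]; abel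
      have hP0 : P = 0 := Finset.sum_eq_zero (fun k hk => by
        rw [hTj k (Finset.ne_of_mem_erase hk)]; simp)
      rw [hD0, hP0]
      simp
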